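/- Let X, Y, Z, W be i.i.d. N(0,1). Define X_{00} = X/4 + (√3/4)Y + (√3/4)Z + (3/4)W, X_{01} = X/4 - (√3/4)Y + (√3/4)Z - (3/4)W, X_{10} = X/4 + (√3/4)Y - (√3/4)Z - (3/4)W, X_{11} = X/4 - (√3/4)Y - (√3/4)Z + (3/4)W. Then each X_{ij} ~ N(0,1), each row sum X_{i0}+X_{i1}, each column sum X_{0j}+X_{1j}, and the total sum X_{00}+X_{01}+X_{10}+X_{11} are all N(0,1), and X_{00}+X_{10} = X/2 + (√3/2)Y while X_{01}+X_{11} = X/2 - (√3/2)Y. -/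

import Mathlib

open MeasureTheory ProbabilityTheory

section TdcsAux

open Real
open scoped ENNReal NNReal

private lemma tdcs_gaussianPDFReal_le (m : ℝ) (v : ℝ≥0) (x : ℝ) :
    gaussianPDFReal m v x ≤ (Real.sqrt (2 * π * v))⁻¹ := by
  rw [gaussianPDFReal]
  have h1 : rexp (-(x - m) ^ 2 / (2 * v)) ≤ 1 := by
    rw [Real.exp_le_one_iff]
    apply div_nonpos_of_nonpos_of_nonneg
    · simp [sq_nonneg]
    · positivity
  calc (Real.sqrt (2 * π * v))⁻¹ * rexp (-(x - m) ^ 2 / (2 * v))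
      ≤ (Real.sqrt (2 * π * v))⁻¹ * 1 := by gcongr
  _ = _ := mul_one _

private lemma tdcs_pdf_conv (v₁ v₂ : ℝ≥0) (h₁ : v₁ ≠ 0) (h₂ : v₂ ≠ 0) (y : ℝ) :
    ∫ x, gaussianPDFReal 0 v₁ x * gaussianPDFReal 0 v₂ (y - x) =
      gaussianPDFReal 0 (v₁ + v₂) y := by
  have ha : (0:ℝ) < v₁ := lt_of_le_of_ne (by positivity) (by exact_mod_cast (Ne.symm h₁))
  have hb : (0:ℝ) < v₂ := lt_of_le_of_ne (by positivity) (by exact_mod_cast (Ne.symm h₂))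
  set a : ℝ := (v₁ : ℝ) with hadef
  set b : ℝ := (v₂ : ℝ) with hbdef
  have hab : (0:ℝ) < a + b := by linarith
  set k : ℝ := (a + b) / (2 * a * b) with hkdef
  have hk : 0 < k := by positivity
  set c : ℝ := a * y / (a + b) with hcdef
  have key : ∀ x : ℝ, gaussianPDFReal 0 v₁ x * gaussianPDFReal 0 v₂ (y - x)
      = gaussianPDFReal 0 (v₁ + v₂) y * ((Real.sqrt (π / k))⁻¹ * rexp (-k * (x - c)^2)) := by
    intro x
    simp only [gaussianPDFReal, NNReal.coe_add, ← hadef, ← hbdef, sub_zero]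
    have hC : (Real.sqrt (2 * π * a))⁻¹ * (Real.sqrt (2 * π * b))⁻¹
        = (Real.sqrt (2 * π * (a + b)))⁻¹ * (Real.sqrt (π / k))⁻¹ := by
      rw [← mul_inv, ← mul_inv, ← Real.sqrt_mul (by positivity), ← Real.sqrt_mul (by positivity)]
      congr 1
      rw [hkdef]
      field_simp
    have hE : rexp (-x ^ 2 / (2 * a)) * rexp (-(y - x) ^ 2 / (2 * b))
        = rexp (-y ^ 2 / (2 * (a + b))) * rexp (-k * (x - c) ^ 2) := by
      rw [← Real.exp_add, ← Real.exp_add]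
      congr 1
      rw [hkdef, hcdef]
      field_simp
      ring
    calc (Real.sqrt (2 * π * a))⁻¹ * rexp (-x ^ 2 / (2 * a)) *
          ((Real.sqrt (2 * π * b))⁻¹ * rexp (-(y - x) ^ 2 / (2 * b)))
        = ((Real.sqrt (2 * π * a))⁻¹ * (Real.sqrt (2 * π * b))⁻¹) *
          (rexp (-x ^ 2 / (2 * a)) * rexp (-(y - x) ^ 2 / (2 * b))) := by ring
      _ = ((Real.sqrt (2 * π * (a + b)))⁻¹ * (Real.sqrt (π / k))⁻¹) *
          (rexp (-y ^ 2 / (2 * (a + b))) * rexp (-k * (x - c) ^ 2)) := by rw [hC, hE]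
      _ = _ := by ring
  simp_rw [key]
  rw [integral_const_mul, integral_const_mul]
  rw [integral_sub_right_eq_self (fun x => rexp (-k * x ^ 2)) c]
  rw [integral_gaussian]
  rw [inv_mul_cancel₀ (by positivity), mul_one]

private lemma tdcs_conv_integrable (v₁ v₂ : ℝ≥0) (y : ℝ) :
    Integrable (fun x => gaussianPDFReal 0 v₁ x * gaussianPDFReal 0 v₂ (y - x)) := by
  refine Integrable.bdd_mul (c := (Real.sqrt (2 * π * v₁))⁻¹)
    (Integrable.comp_sub_left (integrable_gaussianPDFReal 0 v₂) y) ?_ ?_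
  · exact (measurable_gaussianPDFReal 0 v₁).aestronglyMeasurable
  · refine Filter.Eventually.of_forall fun x => ?_
    rw [Real.norm_eq_abs, abs_of_nonneg (gaussianPDFReal_nonneg _ _ _)]
    exact tdcs_gaussianPDFReal_le _ _ _

private lemma tdcs_lint_conv (v₁ v₂ : ℝ≥0) (h₁ : v₁ ≠ 0) (h₂ : v₂ ≠ 0) (z : ℝ) :
    ∫⁻ x, gaussianPDF 0 v₁ x * gaussianPDF 0 v₂ (z - x) = gaussianPDF 0 (v₁ + v₂) z := by
  have : ∀ x, gaussianPDF 0 v₁ x * gaussianPDF 0 v₂ (z - x)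
      = ENNReal.ofReal (gaussianPDFReal 0 v₁ x * gaussianPDFReal 0 v₂ (z - x)) := fun x =>
    (ENNReal.ofReal_mul (gaussianPDFReal_nonneg _ _ _)).symm
  simp_rw [this]
  rw [← ofReal_integral_eq_lintegral_ofReal (tdcs_conv_integrable v₁ v₂ z)
    (Filter.Eventually.of_forall fun x =>
      mul_nonneg (gaussianPDFReal_nonneg _ _ _) (gaussianPDFReal_nonneg _ _ _)),
    tdcs_pdf_conv v₁ v₂ h₁ h₂ z]
  rfl

private lemma tdcs_gaussian_conv (v₁ v₂ : ℝ≥0) (h₁ : v₁ ≠ 0) (h₂ : v₂ ≠ 0) :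
    ((gaussianReal 0 v₁).prod (gaussianReal 0 v₂)).map (fun p : ℝ × ℝ => p.1 + p.2)
      = gaussianReal 0 (v₁ + v₂) := by
  have h₁₂ : v₁ + v₂ ≠ 0 := fun h => h₁ (by simpa using (add_eq_zero.mp h).1)
  have hadd : Measurable (fun p : ℝ × ℝ => p.1 + p.2) := measurable_fst.add measurable_snd
  ext s hs
  rw [Measure.map_apply hadd hs, Measure.prod_apply (hs.preimage hadd)]
  have inner : ∀ x : ℝ, gaussianReal 0 v₂ (Prod.mk x ⁻¹' ((fun p : ℝ × ℝ => p.1 + p.2) ⁻¹' s))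
      = ∫⁻ z in s, gaussianPDF 0 v₂ (z - x) := by
    intro x
    have hteq : (Prod.mk x ⁻¹' ((fun p : ℝ × ℝ => p.1 + p.2) ⁻¹' s)) = (fun y => x + y) ⁻¹' s := rfl
    rw [hteq, gaussianReal_of_var_ne_zero 0 h₂,
      withDensity_apply _ (hs.preimage (measurable_const_add x)),
      ← lintegral_indicator (hs.preimage (measurable_const_add x)),
      ← lintegral_indicator hs]
    have : ∀ y : ℝ, ((fun y => x + y) ⁻¹' s).indicator (gaussianPDF 0 v₂) y
        = s.indicator (fun z => gaussianPDF 0 v₂ (z - x)) (x + y) := by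
      intro y
      by_cases h : x + y ∈ s
      · rw [Set.indicator_of_mem h, Set.indicator_of_mem (by exact h), add_sub_cancel_left]
      · rw [Set.indicator_of_notMem h, Set.indicator_of_notMem (by exact h)]
    simp_rw [this]
    exact lintegral_add_left_eq_self (s.indicator fun z => gaussianPDF 0 v₂ (z - x)) x
  simp_rw [inner]
  rw [gaussianReal_of_var_ne_zero 0 h₁,
    lintegral_withDensity_eq_lintegral_mul _ (measurable_gaussianPDF 0 v₁)
      (Measurable.lintegral_prod_right' (f := fun p : ℝ × ℝ => gaussianPDF 0 v₂ (p.2 - p.1))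
        ((measurable_gaussianPDF 0 v₂).comp (measurable_snd.sub measurable_fst)))]
  have push : ∀ x : ℝ, gaussianPDF 0 v₁ x * ∫⁻ z in s, gaussianPDF 0 v₂ (z - x)
      = ∫⁻ z in s, gaussianPDF 0 v₁ x * gaussianPDF 0 v₂ (z - x) := fun x =>
    (lintegral_const_mul _ ((measurable_gaussianPDF 0 v₂).comp (measurable_id.sub_const x))).symm
  simp_rw [Pi.mul_apply, push]
  rw [lintegral_lintegral_swap (((measurable_gaussianPDF 0 v₁).comp measurable_fst).mul
    ((measurable_gaussianPDF 0 v₂).comp (measurable_snd.sub measurable_fst))).aemeasurable]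
  simp_rw [tdcs_lint_conv v₁ v₂ h₁ h₂]
  rw [gaussianReal_of_var_ne_zero 0 h₁₂, withDensity_apply _ hs]

variable {Ω : Type*} [MeasurableSpace Ω] {μ : Measure Ω} [IsProbabilityMeasure μ]

private lemma tdcs_indep_add {X Y : Ω → ℝ} (hX : Measurable X) (hY : Measurable Y)
    (h : IndepFun X Y μ) {v₁ v₂ : ℝ≥0} (h₁ : v₁ ≠ 0) (h₂ : v₂ ≠ 0)
    (hXg : μ.map X = gaussianReal 0 v₁) (hYg : μ.map Y = gaussianReal 0 v₂) :
    μ.map (fun ω => X ω + Y ω) = gaussianReal 0 (v₁ + v₂) := by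
  have hpair : μ.map (fun ω => (X ω, Y ω)) = (μ.map X).prod (μ.map Y) :=
    (indepFun_iff_map_prod_eq_prod_map_map hX.aemeasurable hY.aemeasurable).mp h
  have : μ.map (fun ω => X ω + Y ω)
      = (μ.map (fun ω => (X ω, Y ω))).map (fun p : ℝ × ℝ => p.1 + p.2) := by
    rw [Measure.map_map (g := fun p : ℝ × ℝ => p.1 + p.2) (measurable_fst.add measurable_snd) (hX.prodMk hY)]
    rfl
  rw [this, hpair, hXg, hYg, tdcs_gaussian_conv v₁ v₂ h₁ h₂]

omit [IsProbabilityMeasure μ] in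
private lemma tdcs_map_smul {X : Ω → ℝ} (hX : Measurable X)
    (hXg : μ.map X = gaussianReal 0 1) (c : ℝ) :
    μ.map (fun ω => c * X ω) = gaussianReal 0 (NNReal.mk (c^2) (sq_nonneg c)) := by
  have : μ.map (fun ω => c * X ω) = (μ.map X).map (c * ·) := by
    rw [Measure.map_map (measurable_const_mul c) hX]; rfl
  rw [this, hXg, gaussianReal_map_const_mul c, mul_zero, mul_one]

private lemma tdcs_two {X Y : Ω → ℝ} (hX : Measurable X) (hY : Measurable Y)
    (h : IndepFun X Y μ) (hXg : μ.map X = gaussianReal 0 1) (hYg : μ.map Y = gaussianReal 0 1)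
    {a b : ℝ} (ha : a ≠ 0) (hb : b ≠ 0) :
    μ.map (fun ω => a * X ω + b * Y ω) = gaussianReal 0 (NNReal.mk (a^2 + b^2) (by positivity)) := by
  have h' : IndepFun (fun ω => a * X ω) (fun ω => b * Y ω) μ :=
    h.comp (measurable_const_mul a) (measurable_const_mul b)
  have := tdcs_indep_add (hX.const_mul a) (hY.const_mul b) h'
    (v₁ := NNReal.mk (a^2) (sq_nonneg a)) (v₂ := NNReal.mk (b^2) (sq_nonneg b))
    (by simp [← NNReal.coe_ne_zero, pow_ne_zero, ha])
    (by simp [← NNReal.coe_ne_zero, pow_ne_zero, hb])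
    (tdcs_map_smul hX hXg a) (tdcs_map_smul hY hYg b)
  convert this using 2
  exact NNReal.eq (by simp)

private lemma tdcs_four {X Y Z W : Ω → ℝ}
    (hX : Measurable X) (hY : Measurable Y) (hZ : Measurable Z) (hW : Measurable W)
    (hindep : iIndepFun ![X, Y, Z, W] μ)
    (hXg : μ.map X = gaussianReal 0 1) (hYg : μ.map Y = gaussianReal 0 1)
    (hZg : μ.map Z = gaussianReal 0 1) (hWg : μ.map W = gaussianReal 0 1)
    {a b c d : ℝ} (ha : a ≠ 0) (hb : b ≠ 0) (hc : c ≠ 0) (hd : d ≠ 0) :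
    μ.map (fun ω => a * X ω + b * Y ω + c * Z ω + d * W ω)
      = gaussianReal 0 (NNReal.mk (a^2 + b^2 + c^2 + d^2) (by positivity)) := by
  have hmeas : ∀ i, Measurable (![X, Y, Z, W] i) := by
    intro i
    fin_cases i <;> simpa using ‹_›
  have hXY : IndepFun X Y μ := by
    have := hindep.indepFun (i := 0) (j := 1) (by decide)
    simpa using this
  have hZW : IndepFun Z W μ := by
    have := hindep.indepFun (i := 2) (j := 3) (by decide)
    simpa using this
  have hUV : IndepFun (fun ω => a * X ω + b * Y ω) (fun ω => c * Z ω + d * W ω) μ := by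
    have hp := hindep.indepFun_prodMk_prodMk hmeas 0 1 2 3
      (by decide) (by decide) (by decide) (by decide)
    have := hp.comp (φ := fun p : ℝ × ℝ => a * p.1 + b * p.2)
      (ψ := fun p : ℝ × ℝ => c * p.1 + d * p.2)
      ((measurable_fst.const_mul a).add (measurable_snd.const_mul b))
      ((measurable_fst.const_mul c).add (measurable_snd.const_mul d))
    exact this
  have hU := tdcs_two hX hY hXY hXg hYg ha hb
  have hV := tdcs_two hZ hW hZW hZg hWg hc hd
  have hsum := tdcs_indep_add ((hX.const_mul a).add (hY.const_mul b))
    ((hZ.const_mul c).add (hW.const_mul d)) hUV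
    (v₁ := NNReal.mk (a^2 + b^2) (by positivity)) (v₂ := NNReal.mk (c^2 + d^2) (by positivity))
    (by rw [← NNReal.coe_ne_zero, NNReal.coe_mk]; positivity)
    (by rw [← NNReal.coe_ne_zero, NNReal.coe_mk]; positivity)
    hU hV
  have : (fun ω => a * X ω + b * Y ω + c * Z ω + d * W ω)
      = fun ω => (a * X ω + b * Y ω) + (c * Z ω + d * W ω) := by
    funext ω; ring
  rw [this]; refine hsum.trans ?_
  congr 1
  rw [← NNReal.coe_inj]
  push_cast
  ring

end TdcsAux

/-- Two-dimensional cascade splitting step: if `X, Y, Z, W` are i.i.d. `N(0,1)` and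
`X_{ij}` are defined by the stated linear combinations, then each `X_{ij}`, each row
sum, each column sum, and the total sum are `N(0,1)`, and the column sums recover
`X/2 ± (√3/2)Y`. -/
theorem two_dim_cascade_split {Ω : Type*} [MeasureSpace Ω] {μ : Measure Ω}
    [IsProbabilityMeasure μ] (X Y Z W : Ω → ℝ)
    (hX : Measurable X) (hY : Measurable Y) (hZ : Measurable Z) (hW : Measurable W)
    (hindep : iIndepFun ![X, Y, Z, W] μ)
    (hXg : μ.map X = gaussianReal 0 1) (hYg : μ.map Y = gaussianReal 0 1)
    (hZg : μ.map Z = gaussianReal 0 1) (hWg : μ.map W = gaussianReal 0 1) :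
    let s3 : ℝ := Real.sqrt 3
    let X00 : Ω → ℝ := fun ω => X ω / 4 + (s3/4) * Y ω + (s3/4) * Z ω + (3/4) * W ω
    let X01 : Ω → ℝ := fun ω => X ω / 4 - (s3/4) * Y ω + (s3/4) * Z ω - (3/4) * W ω
    let X10 : Ω → ℝ := fun ω => X ω / 4 + (s3/4) * Y ω - (s3/4) * Z ω - (3/4) * W ω
    let X11 : Ω → ℝ := fun ω => X ω / 4 - (s3/4) * Y ω - (s3/4) * Z ω + (3/4) * W ω
    (μ.map X00 = gaussianReal 0 1) ∧ (μ.map X01 = gaussianReal 0 1) ∧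
    (μ.map X10 = gaussianReal 0 1) ∧ (μ.map X11 = gaussianReal 0 1) ∧
    (μ.map (fun ω => X00 ω + X01 ω) = gaussianReal 0 1) ∧
    (μ.map (fun ω => X10 ω + X11 ω) = gaussianReal 0 1) ∧
    (μ.map (fun ω => X00 ω + X10 ω) = gaussianReal 0 1) ∧
    (μ.map (fun ω => X01 ω + X11 ω) = gaussianReal 0 1) ∧
    (μ.map (fun ω => X00 ω + X01 ω + X10 ω + X11 ω) = gaussianReal 0 1) ∧
    (∀ ω, X00 ω + X10 ω = X ω / 2 + (s3/2) * Y ω) ∧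
    (∀ ω, X01 ω + X11 ω = X ω / 2 - (s3/2) * Y ω) := by
  intro s3 X00 X01 X10 X11
  have hs3sq : s3 ^ 2 = 3 := Real.sq_sqrt (by norm_num)
  have hs3pos : (0:ℝ) < s3 := Real.sqrt_pos.mpr (by norm_num)
  have hs3 : s3 ≠ 0 := ne_of_gt hs3pos
  -- generic four-variable combination with unit variance
  have gen4 : ∀ a b c d : ℝ, a ≠ 0 → b ≠ 0 → c ≠ 0 → d ≠ 0 →
      a^2 + b^2 + c^2 + d^2 = 1 →
      μ.map (fun ω => a * X ω + b * Y ω + c * Z ω + d * W ω) = gaussianReal 0 1 := by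
    intro a b c d ha hb hc hd hsum
    rw [tdcs_four hX hY hZ hW hindep hXg hYg hZg hWg ha hb hc hd]
    congr 1
    exact NNReal.coe_injective (by simpa using hsum)
  have gen2 : ∀ (U V : Ω → ℝ), Measurable U → Measurable V → IndepFun U V μ →
      μ.map U = gaussianReal 0 1 → μ.map V = gaussianReal 0 1 →
      ∀ a b : ℝ, a ≠ 0 → b ≠ 0 → a^2 + b^2 = 1 →
      μ.map (fun ω => a * U ω + b * V ω) = gaussianReal 0 1 := by
    intro U V hU hV hUV hUg hVg a b ha hb hsum
    rw [tdcs_two hU hV hUV hUg hVg ha hb]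
    congr 1
    exact NNReal.coe_injective (by simpa using hsum)
  have hXY : IndepFun X Y μ := by
    have := hindep.indepFun (i := 0) (j := 1) (by decide); simpa using this
  have hXZ : IndepFun X Z μ := by
    have := hindep.indepFun (i := 0) (j := 2) (by decide); simpa using this
  refine ⟨?_, ?_, ?_, ?_, ?_, ?_, ?_, ?_, ?_, ?_, ?_⟩
  · have e : X00 = fun ω => (1/4) * X ω + (s3/4) * Y ω + (s3/4) * Z ω + (3/4) * W ω := by
      funext ω
      show X ω / 4 + (s3/4) * Y ω + (s3/4) * Z ω + (3/4) * W ω = _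
      ring
    rw [e]
    exact gen4 _ _ _ _ (by norm_num) (by positivity) (by positivity) (by norm_num)
      (by nlinarith [hs3sq])
  · have e : X01 = fun ω => (1/4) * X ω + (-(s3/4)) * Y ω + (s3/4) * Z ω + (-(3/4)) * W ω := by
      funext ω
      show X ω / 4 - (s3/4) * Y ω + (s3/4) * Z ω - (3/4) * W ω = _
      ring
    rw [e]
    exact gen4 _ _ _ _ (by norm_num) (by simp [hs3]) (by positivity) (by norm_num)
      (by nlinarith [hs3sq])
  · have e : X10 = fun ω => (1/4) * X ω + (s3/4) * Y ω + (-(s3/4)) * Z ω + (-(3/4)) * W ω := by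
      funext ω
      show X ω / 4 + (s3/4) * Y ω - (s3/4) * Z ω - (3/4) * W ω = _
      ring
    rw [e]
    exact gen4 _ _ _ _ (by norm_num) (by positivity) (by simp [hs3]) (by norm_num)
      (by nlinarith [hs3sq])
  · have e : X11 = fun ω => (1/4) * X ω + (-(s3/4)) * Y ω + (-(s3/4)) * Z ω + (3/4) * W ω := by
      funext ω
      show X ω / 4 - (s3/4) * Y ω - (s3/4) * Z ω + (3/4) * W ω = _
      ring
    rw [e]
    exact gen4 _ _ _ _ (by norm_num) (by simp [hs3]) (by simp [hs3]) (by norm_num)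
      (by nlinarith [hs3sq])
  · have e : (fun ω => X00 ω + X01 ω) = fun ω => (1/2) * X ω + (s3/2) * Z ω := by
      funext ω
      show (X ω / 4 + (s3/4) * Y ω + (s3/4) * Z ω + (3/4) * W ω)
        + (X ω / 4 - (s3/4) * Y ω + (s3/4) * Z ω - (3/4) * W ω) = _
      ring
    rw [e]
    exact gen2 X Z hX hZ hXZ hXg hZg _ _ (by norm_num) (by positivity) (by nlinarith [hs3sq])
  · have e : (fun ω => X10 ω + X11 ω) = fun ω => (1/2) * X ω + (-(s3/2)) * Z ω := by
      funext ω
      show (X ω / 4 + (s3/4) * Y ω - (s3/4) * Z ω - (3/4) * W ω)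
        + (X ω / 4 - (s3/4) * Y ω - (s3/4) * Z ω + (3/4) * W ω) = _
      ring
    rw [e]
    exact gen2 X Z hX hZ hXZ hXg hZg _ _ (by norm_num) (by simp [hs3]) (by nlinarith [hs3sq])
  · have e : (fun ω => X00 ω + X10 ω) = fun ω => (1/2) * X ω + (s3/2) * Y ω := by
      funext ω
      show (X ω / 4 + (s3/4) * Y ω + (s3/4) * Z ω + (3/4) * W ω)
        + (X ω / 4 + (s3/4) * Y ω - (s3/4) * Z ω - (3/4) * W ω) = _
      ring
    rw [e]
    exact gen2 X Y hX hY hXY hXg hYg _ _ (by norm_num) (by positivity) (by nlinarith [hs3sq])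
  · have e : (fun ω => X01 ω + X11 ω) = fun ω => (1/2) * X ω + (-(s3/2)) * Y ω := by
      funext ω
      show (X ω / 4 - (s3/4) * Y ω + (s3/4) * Z ω - (3/4) * W ω)
        + (X ω / 4 - (s3/4) * Y ω - (s3/4) * Z ω + (3/4) * W ω) = _
      ring
    rw [e]
    exact gen2 X Y hX hY hXY hXg hYg _ _ (by norm_num) (by simp [hs3]) (by nlinarith [hs3sq])
  · have e : (fun ω => X00 ω + X01 ω + X10 ω + X11 ω) = X := by
      funext ω
      show (X ω / 4 + (s3/4) * Y ω + (s3/4) * Z ω + (3/4) * W ω)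
        + (X ω / 4 - (s3/4) * Y ω + (s3/4) * Z ω - (3/4) * W ω)
        + (X ω / 4 + (s3/4) * Y ω - (s3/4) * Z ω - (3/4) * W ω)
        + (X ω / 4 - (s3/4) * Y ω - (s3/4) * Z ω + (3/4) * W ω) = X ω
      ring
    rw [e]
    exact hXg
  · intro ω
    show (X ω / 4 + (s3/4) * Y ω + (s3/4) * Z ω + (3/4) * W ω)
      + (X ω / 4 + (s3/4) * Y ω - (s3/4) * Z ω - (3/4) * W ω) = X ω / 2 + (s3/2) * Y ω
    ring
  · intro ω
    show (X ω / 4 - (s3/4) * Y ω + (s3/4) * Z ω - (3/4) * W ω)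
      + (X ω / 4 - (s3/4) * Y ω - (s3/4) * Z ω + (3/4) * W ω) = X ω / 2 - (s3/2) * Y ω
    ring
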